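/- Let $W^{x,y,t}$ be a Brownian bridge on $[0,t]$ from $x$ to $y$ with $y\neq 0$, and $g:=\sup\{s\leq t: W^{x,y,t}_s = 0\}$ (with $\sup\emptyset:=0$). Then $\mathbb{P}(g\leq s) = 1 - e^{-xy/t}\left(e^{|xy|/t}\,\Phi\!\left(-|x|\sqrt{\tfrac{t-s}{st}} - |y|\sqrt{\tfrac{s}{t(t-s)}}\right) + e^{-|xy|/t}\,\Phi\!\left(|x|\sqrt{\tfrac{t-s}{st}} - |y|\sqrt{\tfrac{s}{t(t-s)}}\right)\right)$ for $s\in(0,t)$; in particular $\mathbb{P}(g=0)=1-e^{-(xy+|xy|)/t}$. -/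

import Mathlib

open MeasureTheory Real

/-- Standard normal CDF. -/
noncomputable def stdNormalCdf (x : ℝ) : ℝ :=
  ∫ u in Set.Iic x, (Real.sqrt (2 * Real.pi))⁻¹ * Real.exp (-u ^ 2 / 2)

/-- Density on `(0,t)` of the last zero of a Brownian bridge from `x` to `y ≠ 0` on `[0,t]`. -/
noncomputable def lastZeroBridgeDensity (x y t s : ℝ) : ℝ :=
  |y| * Real.sqrt t / Real.sqrt (2 * Real.pi) * Real.exp ((y - x) ^ 2 / (2 * t))
    * (1 / (Real.sqrt s * (t - s) ^ ((3 : ℝ) / 2)))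
    * Real.exp (-x ^ 2 / (2 * s)) * Real.exp (-y ^ 2 / (2 * (t - s)))

section Auxiliary

open Set Filter Topology ENNReal

noncomputable def stdGauss (u : ℝ) : ℝ := (Real.sqrt (2 * Real.pi))⁻¹ * Real.exp (-u ^ 2 / 2)

lemma stdNormalCdf_eq (x : ℝ) : stdNormalCdf x = ∫ u in Set.Iic x, stdGauss u := rfl

lemma stdGauss_def (u : ℝ) : stdGauss u = (Real.sqrt (2 * Real.pi))⁻¹ * Real.exp (-u ^ 2 / 2) := rfl

lemma stdGauss_even (u : ℝ) : stdGauss (-u) = stdGauss u := by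
  unfold stdGauss; rw [neg_sq]

noncomputable def bridgeG (x y t : ℝ) (s : ℝ) : ℝ :=
  Real.exp (-(x * y) / t) *
    (Real.exp (|x * y| / t)
        * stdNormalCdf (-|x| * Real.sqrt ((t - s) / (s * t)) - |y| * Real.sqrt (s / (t * (t - s))))
      + Real.exp (-|x * y| / t)
        * stdNormalCdf (|x| * Real.sqrt ((t - s) / (s * t)) - |y| * Real.sqrt (s / (t * (t - s)))))



lemma stdGauss_cont : Continuous stdGauss := by
  unfold stdGauss; fun_prop

lemma stdGauss_nonneg (u : ℝ) : 0 ≤ stdGauss u := by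
  unfold stdGauss; positivity

lemma stdGauss_integrable : Integrable stdGauss := by
  have h : ∀ u : ℝ, stdGauss u = (Real.sqrt (2 * Real.pi))⁻¹ * Real.exp (-(1/2 : ℝ) * u ^ 2) := by
    intro u; unfold stdGauss; ring_nf
  rw [show stdGauss = fun u => (Real.sqrt (2 * Real.pi))⁻¹ * Real.exp (-(1/2 : ℝ) * u ^ 2) from funext h]
  exact (integrable_exp_neg_mul_sq (by norm_num)).const_mul _

lemma stdGauss_integral : ∫ u : ℝ, stdGauss u = 1 := by
  have h : ∀ u : ℝ, stdGauss u = (Real.sqrt (2 * Real.pi))⁻¹ * Real.exp (-(1/2 : ℝ) * u ^ 2) := by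
    intro u; unfold stdGauss; ring_nf
  simp_rw [h, MeasureTheory.integral_const_mul, integral_gaussian]
  rw [show (Real.pi / (1/2)) = 2 * Real.pi by ring]
  exact inv_mul_cancel₀ (by positivity)

lemma hasDerivAt_stdNormalCdf (x : ℝ) : HasDerivAt stdNormalCdf (stdGauss x) x := by
  have key : ∀ z : ℝ, stdNormalCdf z = stdNormalCdf 0 + ∫ u in (0:ℝ)..z, stdGauss u := by
    intro z
    have := intervalIntegral.integral_Iic_sub_Iic (stdGauss_integrable.integrableOn)
      (stdGauss_integrable.integrableOn) (a := 0) (b := z)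
    rw [stdNormalCdf_eq, stdNormalCdf_eq]
    linarith [this]
  have hd : HasDerivAt (fun z => stdNormalCdf 0 + ∫ u in (0:ℝ)..z, stdGauss u) (stdGauss x) x := by
    refine HasDerivAt.const_add _ ?_
    refine intervalIntegral.integral_hasDerivAt_right stdGauss_integrable.intervalIntegrable
      ?_ stdGauss_cont.continuousAt
    exact ⟨Set.univ, Filter.univ_mem, stdGauss_cont.aestronglyMeasurable.restrict⟩
  exact hd.congr_of_eventuallyEq (Filter.Eventually.of_forall key)


lemma stdNormalCdf_nonneg (x : ℝ) : 0 ≤ stdNormalCdf x := by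
  rw [stdNormalCdf_eq]
  exact setIntegral_nonneg measurableSet_Iic fun u _ => stdGauss_nonneg u

lemma stdNormalCdf_mono : Monotone stdNormalCdf := by
  intro a b hab
  rw [stdNormalCdf_eq, stdNormalCdf_eq]
  exact setIntegral_mono_set stdGauss_integrable.integrableOn
    (Filter.Eventually.of_forall fun u => stdGauss_nonneg u)
    (HasSubset.Subset.eventuallyLE (Set.Iic_subset_Iic.mpr hab))

noncomputable def nuGauss : Measure ℝ := volume.withDensity (fun u => ENNReal.ofReal (stdGauss u))

lemma nuGauss_Iic (x : ℝ) : nuGauss (Set.Iic x) = ENNReal.ofReal (stdNormalCdf x) := by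
  rw [nuGauss, withDensity_apply _ measurableSet_Iic, stdNormalCdf_eq,
    ofReal_integral_eq_lintegral_ofReal stdGauss_integrable.integrableOn
      (Filter.Eventually.of_forall fun u => stdGauss_nonneg u)]

lemma nuGauss_univ : nuGauss Set.univ = 1 := by
  rw [nuGauss, withDensity_apply _ MeasurableSet.univ, Measure.restrict_univ,
    ← ofReal_integral_eq_lintegral_ofReal stdGauss_integrable
      (Filter.Eventually.of_forall fun u => stdGauss_nonneg u), stdGauss_integral,
    ENNReal.ofReal_one]

lemma tendsto_stdNormalCdf_atTop : Tendsto stdNormalCdf atTop (𝓝 1) := by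
  have h := tendsto_measure_Iic_atTop (μ := nuGauss)
  rw [nuGauss_univ] at h
  simp_rw [nuGauss_Iic] at h
  have h2 := (ENNReal.tendsto_toReal (by norm_num : (1 : ℝ≥0∞) ≠ ⊤)).comp h
  simp only [Function.comp_def, ENNReal.ofReal_toReal_eq_iff, ENNReal.toReal_one] at h2
  refine h2.congr fun x => ?_
  exact ENNReal.toReal_ofReal (stdNormalCdf_nonneg x)

lemma tendsto_stdNormalCdf_seq : Tendsto (fun n : ℕ => stdNormalCdf (-(n:ℝ))) atTop (𝓝 0) := by
  have hinter : (⋂ n : ℕ, Set.Iic (-(n:ℝ))) = ∅ := by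
    ext z; simp only [Set.mem_iInter, Set.mem_Iic, Set.mem_empty_iff_false, iff_false, not_forall,
      not_le]
    obtain ⟨n, hn⟩ := exists_nat_gt (-z)
    exact ⟨n, by linarith⟩
  have h := tendsto_measure_iInter_atTop (μ := nuGauss)
    (fun n => measurableSet_Iic.nullMeasurableSet)
    (fun m n hmn => Set.Iic_subset_Iic.mpr (neg_le_neg (Nat.cast_le.mpr hmn)))
    ⟨0, by rw [nuGauss_Iic]; exact ENNReal.ofReal_ne_top⟩
  rw [hinter, measure_empty] at h
  simp only [Function.comp_def] at h
  simp_rw [nuGauss_Iic] at h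
  have h2 := (ENNReal.tendsto_toReal (by norm_num : (0 : ℝ≥0∞) ≠ ⊤)).comp h
  simp only [Function.comp_def, ENNReal.toReal_zero] at h2
  refine h2.congr fun n => ?_
  exact ENNReal.toReal_ofReal (stdNormalCdf_nonneg _)

lemma tendsto_stdNormalCdf_atBot : Tendsto stdNormalCdf atBot (𝓝 0) := by
  rw [NormedAddCommGroup.tendsto_nhds_zero]
  intro ε hε
  obtain ⟨n, hn⟩ := (tendsto_stdNormalCdf_seq.eventually (gt_mem_nhds hε)).exists
  filter_upwards [eventually_le_atBot (-(n:ℝ))] with z hz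
  rw [Real.norm_eq_abs, abs_of_nonneg (stdNormalCdf_nonneg z)]
  exact lt_of_le_of_lt (stdNormalCdf_mono hz) hn

lemma stdNormalCdf_zero : stdNormalCdf 0 = 1/2 := by
  have h1 : stdNormalCdf 0 = ∫ u in Set.Ioi (0:ℝ), stdGauss u := by
    rw [stdNormalCdf_eq]
    rw [show (∫ u in Set.Iic (0:ℝ), stdGauss u) = ∫ u in Set.Iic (0:ℝ), stdGauss (-u) from
      setIntegral_congr_fun measurableSet_Iic fun u _ => (stdGauss_even u).symm]
    rw [integral_comp_neg_Iic, neg_zero]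
  have h2 : stdNormalCdf 0 + ∫ u in Set.Ioi (0:ℝ), stdGauss u = 1 := by
    rw [stdNormalCdf_eq, ← stdGauss_integral]
    rw [← MeasureTheory.setIntegral_union (Set.Iic_disjoint_Ioi le_rfl) measurableSet_Ioi
      stdGauss_integrable.integrableOn stdGauss_integrable.integrableOn,
      Set.Iic_union_Ioi, MeasureTheory.setIntegral_univ]
  linarith

lemma stdNormalCdf_continuous : Continuous stdNormalCdf :=
  continuous_iff_continuousAt.mpr fun x => (hasDerivAt_stdNormalCdf x).continuousAt

lemma hasDerivAt_bridgeG (x y t s : ℝ) (ht : 0 < t) (hs : 0 < s) (hst : s < t) :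
    HasDerivAt (bridgeG x y t) (-(lastZeroBridgeDensity x y t s)) s := by
  have hts : 0 < t - s := by linarith
  have hsne : s ≠ 0 := hs.ne'
  have htne : t ≠ 0 := ht.ne'
  have htsne : t - s ≠ 0 := hts.ne'
  have hP : 0 < (t - s) / (s * t) := by positivity
  have hQ : 0 < s / (t * (t - s)) := by positivity
  -- derivative of inner rational functions
  have hp : HasDerivAt (fun u : ℝ => (t - u) / (u * t)) (-(1 / s ^ 2)) s := by
    have h : HasDerivAt (fun u : ℝ => (t - u) / (u * t)) _ s := (((hasDerivAt_id s).const_sub t).div ((hasDerivAt_id s).mul_const t)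
      (by positivity : s * t ≠ 0))
    convert h using 1
    simp only [id]
    field_simp
    ring
  have hq : HasDerivAt (fun u : ℝ => u / (t * (t - u))) (1 / (t - s) ^ 2) s := by
    have h : HasDerivAt (fun u : ℝ => u / (t * (t - u))) _ s := ((hasDerivAt_id s).div (((hasDerivAt_id s).const_sub t).const_mul t)
      (by positivity : t * (t - s) ≠ 0))
    convert h using 1
    simp only [id]
    field_simp
    ring
  -- derivative of square roots
  set dp : ℝ := 1 / (2 * Real.sqrt ((t - s) / (s * t))) * -(1 / s ^ 2) with hdp
  set dq : ℝ := 1 / (2 * Real.sqrt (s / (t * (t - s)))) * (1 / (t - s) ^ 2) with hdq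
  have hsp : HasDerivAt (fun u : ℝ => Real.sqrt ((t - u) / (u * t))) dp s :=
    (Real.hasDerivAt_sqrt hP.ne').comp s hp
  have hsq : HasDerivAt (fun u : ℝ => Real.sqrt (u / (t * (t - u)))) dq s :=
    (Real.hasDerivAt_sqrt hQ.ne').comp s hq
  -- derivatives of the Phi arguments
  set A' : ℝ := -|x| * dp - |y| * dq with hA'
  set B' : ℝ := |x| * dp - |y| * dq with hB'
  have hA : HasDerivAt (fun u : ℝ =>
      -|x| * Real.sqrt ((t - u) / (u * t)) - |y| * Real.sqrt (u / (t * (t - u)))) A' s :=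
    (hsp.const_mul (-|x|)).sub (hsq.const_mul |y|)
  have hB : HasDerivAt (fun u : ℝ =>
      |x| * Real.sqrt ((t - u) / (u * t)) - |y| * Real.sqrt (u / (t * (t - u)))) B' s :=
    (hsp.const_mul |x|).sub (hsq.const_mul |y|)
  set As : ℝ := -|x| * Real.sqrt ((t - s) / (s * t)) - |y| * Real.sqrt (s / (t * (t - s))) with hAs
  set Bs : ℝ := |x| * Real.sqrt ((t - s) / (s * t)) - |y| * Real.sqrt (s / (t * (t - s))) with hBs
  have hPhiA : HasDerivAt (fun u : ℝ => stdNormalCdf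
      (-|x| * Real.sqrt ((t - u) / (u * t)) - |y| * Real.sqrt (u / (t * (t - u)))))
      (stdGauss As * A') s := by
    have h := (hasDerivAt_stdNormalCdf As).comp s hA
    exact h
  have hPhiB : HasDerivAt (fun u : ℝ => stdNormalCdf
      (|x| * Real.sqrt ((t - u) / (u * t)) - |y| * Real.sqrt (u / (t * (t - u)))))
      (stdGauss Bs * B') s := by
    have h := (hasDerivAt_stdNormalCdf Bs).comp s hB
    exact h
  have hG : HasDerivAt (bridgeG x y t)
      (Real.exp (-(x * y) / t) * (Real.exp (|x * y| / t) * (stdGauss As * A')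
        + Real.exp (-|x * y| / t) * (stdGauss Bs * B'))) s :=
    ((hPhiA.const_mul (Real.exp (|x * y| / t))).add
      (hPhiB.const_mul (Real.exp (-|x * y| / t)))).const_mul (Real.exp (-(x * y) / t))
  convert hG using 1
  -- now the algebraic identity
  have hsqrtP : Real.sqrt ((t - s) / (s * t)) * Real.sqrt (s / (t * (t - s))) = 1 / t := by
    rw [← Real.sqrt_mul hP.le]
    rw [show (t - s) / (s * t) * (s / (t * (t - s))) = (1 / t) ^ 2 by field_simp]
    exact Real.sqrt_sq (by positivity)
  have hA2 : As ^ 2 = x ^ 2 * ((t - s) / (s * t)) + y ^ 2 * (s / (t * (t - s))) + 2 * |x * y| / t := by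
    have e1 : As ^ 2 = |x| ^ 2 * (Real.sqrt ((t - s) / (s * t)) * Real.sqrt ((t - s) / (s * t)))
        + |y| ^ 2 * (Real.sqrt (s / (t * (t - s))) * Real.sqrt (s / (t * (t - s))))
        + 2 * (|x| * |y|) * (Real.sqrt ((t - s) / (s * t)) * Real.sqrt (s / (t * (t - s)))) := by
      rw [hAs]; ring
    rw [e1, Real.mul_self_sqrt hP.le, Real.mul_self_sqrt hQ.le, hsqrtP, sq_abs, sq_abs, ← abs_mul]
    ring
  have hB2 : Bs ^ 2 = x ^ 2 * ((t - s) / (s * t)) + y ^ 2 * (s / (t * (t - s))) - 2 * |x * y| / t := by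
    have e1 : Bs ^ 2 = |x| ^ 2 * (Real.sqrt ((t - s) / (s * t)) * Real.sqrt ((t - s) / (s * t)))
        + |y| ^ 2 * (Real.sqrt (s / (t * (t - s))) * Real.sqrt (s / (t * (t - s))))
        - 2 * (|x| * |y|) * (Real.sqrt ((t - s) / (s * t)) * Real.sqrt (s / (t * (t - s)))) := by
      rw [hBs]; ring
    rw [e1, Real.mul_self_sqrt hP.le, Real.mul_self_sqrt hQ.le, hsqrtP, sq_abs, sq_abs, ← abs_mul]
    ring
  set R : ℝ := Real.exp (-(x ^ 2 * ((t - s) / (s * t)) + y ^ 2 * (s / (t * (t - s)))) / 2) with hR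
  have eA : Real.exp (|x * y| / t) * Real.exp (-As ^ 2 / 2) = R := by
    rw [← Real.exp_add, hR, hA2]; congr 1; ring
  have eB : Real.exp (-|x * y| / t) * Real.exp (-Bs ^ 2 / 2) = R := by
    rw [← Real.exp_add, hR, hB2]; congr 1; ring
  -- exponent recombination
  have eR : Real.exp (-(x * y) / t) * R
      = Real.exp ((y - x) ^ 2 / (2 * t)) * Real.exp (-x ^ 2 / (2 * s))
        * Real.exp (-y ^ 2 / (2 * (t - s))) := by
    rw [hR, ← Real.exp_add, ← Real.exp_add, ← Real.exp_add]
    congr 1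
    field_simp
    ring
  -- sum of derivatives of arguments
  have hrpow : (t - s) ^ ((3 : ℝ) / 2) = (t - s) * Real.sqrt (t - s) := by
    rw [show (3 : ℝ) / 2 = 1 + 1 / 2 by norm_num, Real.rpow_add hts, Real.rpow_one,
      ← Real.sqrt_eq_rpow]
  have hsqQ : Real.sqrt (s / (t * (t - s)))
      = Real.sqrt s / (Real.sqrt t * Real.sqrt (t - s)) := by
    rw [Real.sqrt_div hs.le, Real.sqrt_mul ht.le]
  have eS : A' + B' = -(|y| * Real.sqrt t / (Real.sqrt s * (t - s) ^ ((3 : ℝ) / 2))) := by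
    have h1 : A' + B' = -(2 * |y|) * dq := by rw [hA', hB']; ring
    rw [h1, hdq, hsqQ, hrpow]
    have h2 : Real.sqrt s ≠ 0 := by positivity
    have h3 : Real.sqrt t ≠ 0 := by positivity
    have h4 : Real.sqrt (t - s) ≠ 0 := by positivity
    field_simp
    have h5 : Real.sqrt (t - s) * Real.sqrt (t - s) = t - s := Real.mul_self_sqrt hts.le
    linear_combination (-|y|) * h5
  -- final assembly
  calc -(lastZeroBridgeDensity x y t s)
      = (Real.exp (-(x * y) / t) * R) * (Real.sqrt (2 * Real.pi))⁻¹
          * (-(|y| * Real.sqrt t / (Real.sqrt s * (t - s) ^ ((3 : ℝ) / 2)))) := by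
        rw [eR, lastZeroBridgeDensity]
        field_simp
    _ = (Real.exp (-(x * y) / t) * R) * (Real.sqrt (2 * Real.pi))⁻¹ * (A' + B') := by rw [eS]
    _ = Real.exp (-(x * y) / t) * ((Real.sqrt (2 * Real.pi))⁻¹ * (R * A')
          + (Real.sqrt (2 * Real.pi))⁻¹ * (R * B')) := by ring
    _ = Real.exp (-(x * y) / t) * (Real.exp (|x * y| / t) * (stdGauss As * A')
          + Real.exp (-|x * y| / t) * (stdGauss Bs * B')) := by
        have eA' : (Real.sqrt (2 * Real.pi))⁻¹ * (R * A')
            = Real.exp (|x * y| / t) * (stdGauss As * A') := by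
          rw [stdGauss_def, ← eA]; ring
        have eB' : (Real.sqrt (2 * Real.pi))⁻¹ * (R * B')
            = Real.exp (-|x * y| / t) * (stdGauss Bs * B') := by
          rw [stdGauss_def, ← eB]; ring
        rw [eA', eB']


lemma density_nonneg (x y t s : ℝ) (hs : 0 < s) (hst : s < t) :
    0 ≤ lastZeroBridgeDensity x y t s := by
  have hts : 0 < t - s := by linarith
  have ht : 0 < t := hs.trans hst
  unfold lastZeroBridgeDensity
  positivity

lemma density_measurable (x y t : ℝ) : Measurable (fun s => lastZeroBridgeDensity x y t s) := by
  unfold lastZeroBridgeDensity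
  have h1 : Continuous (fun s : ℝ => (t - s) ^ ((3 : ℝ) / 2)) := by
    rw [continuous_iff_continuousAt]
    intro s
    exact (Real.continuousAt_rpow_const _ _ (Or.inr (by norm_num))).comp
      (continuous_const.sub continuous_id).continuousAt
  apply Measurable.mul
  apply Measurable.mul
  apply Measurable.mul
  apply Measurable.mul
  · exact measurable_const
  · exact measurable_const
  · exact ((measurable_const.div
      ((Real.continuous_sqrt.measurable.comp measurable_id).mul h1.measurable)))
  · exact (Real.measurable_exp.comp (measurable_const.div (measurable_const.mul measurable_id)))
  · exact (Real.measurable_exp.comp (measurable_const.div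
      (measurable_const.mul (measurable_const.sub measurable_id))))

lemma density_continuousOn (x y t : ℝ) (ht : 0 < t) :
    ContinuousOn (fun s => lastZeroBridgeDensity x y t s) (Set.Ioo 0 t) := by
  intro s hs
  obtain ⟨hs0, hst⟩ := hs
  have hts : 0 < t - s := by linarith
  apply ContinuousAt.continuousWithinAt
  unfold lastZeroBridgeDensity
  have hsqrt : ContinuousAt (fun s : ℝ => Real.sqrt s * (t - s) ^ ((3 : ℝ) / 2)) s := by
    apply ContinuousAt.mul
    · exact Real.continuous_sqrt.continuousAt
    · exact (Real.continuousAt_rpow_const _ _ (Or.inr (by norm_num))).comp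
        (continuous_const.sub continuous_id).continuousAt
  apply ContinuousAt.mul
  apply ContinuousAt.mul
  apply ContinuousAt.mul
  apply ContinuousAt.mul
  · exact continuousAt_const
  · exact continuousAt_const
  · exact continuousAt_const.div hsqrt (by positivity)
  · exact Real.continuous_exp.continuousAt.comp
      (continuousAt_const.div (continuous_const.mul continuous_id).continuousAt (by positivity))
  · exact Real.continuous_exp.continuousAt.comp
      (continuousAt_const.div
        (continuous_const.mul (continuous_const.sub continuous_id)).continuousAt (by positivity))

lemma density_intervalIntegral (x y t a b : ℝ) (ht : 0 < t) (ha : 0 < a) (hab : a ≤ b)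
    (hb : b < t) :
    ∫ u in a..b, lastZeroBridgeDensity x y t u = bridgeG x y t a - bridgeG x y t b := by
  have hsub : Set.uIcc a b ⊆ Set.Ioo 0 t := by
    rw [Set.uIcc_of_le hab]
    exact fun u hu => ⟨lt_of_lt_of_le ha hu.1, lt_of_le_of_lt hu.2 hb⟩
  have hderiv : ∀ u ∈ Set.uIcc a b,
      HasDerivAt (fun v => -(bridgeG x y t v)) (lastZeroBridgeDensity x y t u) u := by
    intro u hu
    have h := (hasDerivAt_bridgeG x y t u ht (hsub hu).1 (hsub hu).2).neg
    rw [neg_neg] at h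
    exact h
  have hint : IntervalIntegrable (fun u => lastZeroBridgeDensity x y t u) volume a b :=
    ((density_continuousOn x y t ht).mono hsub).intervalIntegrable
  have := intervalIntegral.integral_eq_sub_of_hasDerivAt hderiv hint
  rw [this]
  ring

lemma density_lintegral_Ioc (x y t a b : ℝ) (ht : 0 < t) (ha : 0 < a) (hab : a ≤ b) (hb : b < t) :
    ∫⁻ u in Set.Ioc a b, ENNReal.ofReal (lastZeroBridgeDensity x y t u)
      = ENNReal.ofReal (bridgeG x y t a - bridgeG x y t b) := by
  have hIcc : Set.Icc a b ⊆ Set.Ioo 0 t := fun u hu =>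
    ⟨lt_of_lt_of_le ha hu.1, lt_of_le_of_lt hu.2 hb⟩
  have hinteg : IntegrableOn (fun u => lastZeroBridgeDensity x y t u) (Set.Ioc a b) :=
    (((density_continuousOn x y t ht).mono hIcc).integrableOn_Icc).mono_set Set.Ioc_subset_Icc_self
  rw [← ofReal_integral_eq_lintegral_ofReal hinteg]
  · rw [← intervalIntegral.integral_of_le hab, density_intervalIntegral x y t a b ht ha hab hb]
  · rw [Filter.EventuallyLE, ae_restrict_iff' measurableSet_Ioc]
    exact Filter.Eventually.of_forall fun u hu =>
      density_nonneg x y t u (ha.trans hu.1) (lt_of_le_of_lt hu.2 hb)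


lemma tendsto_sqrt_atTop' : Tendsto Real.sqrt atTop atTop := by
  apply tendsto_atTop_atTop.mpr
  intro b
  exact ⟨b ^ 2, fun a ha => le_trans (le_abs_self b)
    (by rw [← Real.sqrt_sq_eq_abs]; exact Real.sqrt_le_sqrt ha)⟩

section lims
variable {t : ℝ}

lemma tendsto_p_zero (ht : 0 < t) :
    Tendsto (fun s : ℝ => Real.sqrt ((t - s) / (s * t))) (𝓝[>] 0) atTop := by
  apply tendsto_sqrt_atTop'.comp
  have h1 : Tendsto (fun s : ℝ => s * t) (𝓝[>] 0) (𝓝[>] 0) := by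
    rw [tendsto_nhdsWithin_iff]
    constructor
    · have h0 : Tendsto (fun s : ℝ => s * t) (𝓝 0) (𝓝 (0 * t)) :=
        (continuous_id.mul continuous_const).tendsto 0
      have := h0.mono_left (nhdsWithin_le_nhds (s := Set.Ioi (0:ℝ)))
      simpa using this
    · exact eventually_nhdsWithin_of_forall fun s hs => by
        exact Set.mem_Ioi.mpr (mul_pos hs ht)
  have h2 : Tendsto (fun s : ℝ => (s * t)⁻¹) (𝓝[>] 0) atTop := tendsto_inv_nhdsGT_zero.comp h1
  have h3 : Tendsto (fun s : ℝ => t - s) (𝓝[>] 0) (𝓝 t) := by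
    have h0 : Tendsto (fun s : ℝ => t - s) (𝓝 0) (𝓝 (t - 0)) :=
      (continuous_const.sub continuous_id).tendsto 0
    have := h0.mono_left (nhdsWithin_le_nhds (s := Set.Ioi (0:ℝ)))
    simpa using this
  have := h3.pos_mul_atTop ht h2
  exact this.congr fun s => (div_eq_mul_inv _ _).symm

lemma tendsto_q_zero (ht : 0 < t) :
    Tendsto (fun s : ℝ => Real.sqrt (s / (t * (t - s)))) (𝓝[>] 0) (𝓝 0) := by
  have h : Tendsto (fun s : ℝ => s / (t * (t - s))) (𝓝[>] 0) (𝓝 0) := by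
    have h1 : Tendsto (fun s : ℝ => s / (t * (t - s))) (𝓝 0) (𝓝 (0 / (t * (t - 0)))) :=
      Filter.Tendsto.div tendsto_id
        (tendsto_const_nhds.mul (tendsto_const_nhds.sub tendsto_id))
        (by simpa using (mul_pos ht ht).ne')
    have h2 := h1.mono_left (nhdsWithin_le_nhds (s := Set.Ioi (0:ℝ)))
    simpa using h2
  have := (Real.continuous_sqrt.tendsto 0).comp h
  simpa [Function.comp_def] using this

lemma tendsto_p_t (ht : 0 < t) :
    Tendsto (fun s : ℝ => Real.sqrt ((t - s) / (s * t))) (𝓝[<] t) (𝓝 0) := by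
  have h : Tendsto (fun s : ℝ => (t - s) / (s * t)) (𝓝[<] t) (𝓝 0) := by
    have h1 : Tendsto (fun s : ℝ => (t - s) / (s * t)) (𝓝 t) (𝓝 ((t - t) / (t * t))) :=
      Filter.Tendsto.div (tendsto_const_nhds.sub tendsto_id)
        (tendsto_id.mul tendsto_const_nhds) (by positivity)
    have h2 := h1.mono_left (nhdsWithin_le_nhds (s := Set.Iio t))
    simpa using h2
  have := (Real.continuous_sqrt.tendsto 0).comp h
  simpa [Function.comp_def] using this

lemma tendsto_q_t (ht : 0 < t) :
    Tendsto (fun s : ℝ => Real.sqrt (s / (t * (t - s)))) (𝓝[<] t) atTop := by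
  apply tendsto_sqrt_atTop'.comp
  have h1 : Tendsto (fun s : ℝ => t * (t - s)) (𝓝[<] t) (𝓝[>] 0) := by
    rw [tendsto_nhdsWithin_iff]
    constructor
    · have h0 : Tendsto (fun s : ℝ => t * (t - s)) (𝓝 t) (𝓝 (t * (t - t))) :=
        (continuous_const.mul (continuous_const.sub continuous_id)).tendsto t
      have := h0.mono_left (nhdsWithin_le_nhds (s := Set.Iio t))
      simpa using this
    · exact eventually_nhdsWithin_of_forall fun s hs =>
        Set.mem_Ioi.mpr (mul_pos ht (by simp at hs; linarith))
  have h2 : Tendsto (fun s : ℝ => (t * (t - s))⁻¹) (𝓝[<] t) atTop := tendsto_inv_nhdsGT_zero.comp h1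
  have h3 : Tendsto (fun s : ℝ => s) (𝓝[<] t) (𝓝 t) := tendsto_id.mono_left nhdsWithin_le_nhds
  have := h3.pos_mul_atTop ht h2
  exact this.congr fun s => (div_eq_mul_inv _ _).symm

end lims

lemma tendsto_bridgeG_t (x y t : ℝ) (hy : y ≠ 0) (ht : 0 < t) :
    Tendsto (bridgeG x y t) (𝓝[<] t) (𝓝 0) := by
  have hy' : 0 < |y| := abs_pos.mpr hy
  have hq := (tendsto_q_t ht).const_mul_atTop hy'
  have hqs : Tendsto (fun s : ℝ => -(|y| * Real.sqrt (s / (t * (t - s))))) (𝓝[<] t) atBot :=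
    tendsto_neg_atTop_atBot.comp hq
  have hpA : Tendsto (fun s : ℝ => -|x| * Real.sqrt ((t - s) / (s * t))) (𝓝[<] t)
      (𝓝 (-|x| * 0)) := (tendsto_p_t ht).const_mul _
  have hpB : Tendsto (fun s : ℝ => |x| * Real.sqrt ((t - s) / (s * t))) (𝓝[<] t)
      (𝓝 (|x| * 0)) := (tendsto_p_t ht).const_mul _
  have hA : Tendsto (fun s : ℝ => -|x| * Real.sqrt ((t - s) / (s * t))
      - |y| * Real.sqrt (s / (t * (t - s)))) (𝓝[<] t) atBot := by
    have := hpA.add_atBot hqs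
    exact this.congr fun s => by ring
  have hB : Tendsto (fun s : ℝ => |x| * Real.sqrt ((t - s) / (s * t))
      - |y| * Real.sqrt (s / (t * (t - s)))) (𝓝[<] t) atBot := by
    have := hpB.add_atBot hqs
    exact this.congr fun s => by ring
  have hPA := tendsto_stdNormalCdf_atBot.comp hA
  have hPB := tendsto_stdNormalCdf_atBot.comp hB
  have hG := ((hPA.const_mul (Real.exp (|x * y| / t))).add
      (hPB.const_mul (Real.exp (-|x * y| / t)))).const_mul (Real.exp (-(x * y) / t))
  simp only [Function.comp_def, mul_zero, add_zero, zero_add] at hG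
  exact hG

lemma tendsto_bridgeG_zero (x y t : ℝ) (hy : y ≠ 0) (ht : 0 < t) :
    Tendsto (bridgeG x y t) (𝓝[>] 0) (𝓝 (Real.exp (-(x * y + |x * y|) / t))) := by
  rcases eq_or_ne x 0 with hx | hx
  · subst hx
    have hq : Tendsto (fun s : ℝ => -(|y| * Real.sqrt (s / (t * (t - s))))) (𝓝[>] 0) (𝓝 0) := by
      have := ((tendsto_q_zero ht).const_mul |y|).neg
      simpa using this
    have hP := (stdNormalCdf_continuous.tendsto 0).comp hq
    simp only [Function.comp_def, stdNormalCdf_zero] at hP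
    have funeq : bridgeG 0 y t = fun s =>
        stdNormalCdf (-(|y| * Real.sqrt (s / (t * (t - s)))))
          + stdNormalCdf (-(|y| * Real.sqrt (s / (t * (t - s))))) := by
      funext s
      simp [bridgeG]
    have hval : Real.exp (-((0:ℝ) * y + |(0:ℝ) * y|) / t) = 1 := by simp
    rw [hval, funeq]
    have := hP.add hP
    rwa [show (1:ℝ)/2 + 1/2 = 1 from by norm_num] at this
  · have hx' : 0 < |x| := abs_pos.mpr hx
    have hxneg : -|x| < 0 := by linarith
    have hp := tendsto_p_zero ht
    have hqA : Tendsto (fun s : ℝ => -(|y| * Real.sqrt (s / (t * (t - s))))) (𝓝[>] 0) (𝓝 0) := by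
      have := ((tendsto_q_zero ht).const_mul |y|).neg
      simpa using this
    have hA : Tendsto (fun s : ℝ => -|x| * Real.sqrt ((t - s) / (s * t))
        - |y| * Real.sqrt (s / (t * (t - s)))) (𝓝[>] 0) atBot := by
      have h1 : Tendsto (fun s : ℝ => -|x| * Real.sqrt ((t - s) / (s * t))) (𝓝[>] 0) atBot :=
        tendsto_const_nhds.neg_mul_atTop hxneg hp
      have := h1.atBot_add hqA
      exact this.congr fun s => by ring
    have hB : Tendsto (fun s : ℝ => |x| * Real.sqrt ((t - s) / (s * t))
        - |y| * Real.sqrt (s / (t * (t - s)))) (𝓝[>] 0) atTop := by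
      have h1 : Tendsto (fun s : ℝ => |x| * Real.sqrt ((t - s) / (s * t))) (𝓝[>] 0) atTop :=
        hp.const_mul_atTop hx'
      have := h1.atTop_add hqA
      exact this.congr fun s => by ring
    have hPA := tendsto_stdNormalCdf_atBot.comp hA
    have hPB := tendsto_stdNormalCdf_atTop.comp hB
    have hG := ((hPA.const_mul (Real.exp (|x * y| / t))).add
        (hPB.const_mul (Real.exp (-|x * y| / t)))).const_mul (Real.exp (-(x * y) / t))
    simp only [Function.comp_def, mul_zero, mul_one, zero_add] at hG
    have heq : Real.exp (-(x * y) / t) * Real.exp (-|x * y| / t)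
        = Real.exp (-(x * y + |x * y|) / t) := by
      rw [← Real.exp_add]; congr 1; ring
    rw [heq] at hG
    exact hG


section main
variable (x y t : ℝ)

/-- The sequence `s/(n+2)` tendsto `𝓝[>] 0`. -/
lemma seq_tendsto_zero {s : ℝ} (hs : 0 < s) :
    Tendsto (fun n : ℕ => s / (n + 2)) atTop (𝓝[>] 0) := by
  rw [tendsto_nhdsWithin_iff]
  constructor
  · have h1 : Tendsto (fun n : ℕ => ((n : ℝ) + 2)) atTop atTop :=
      tendsto_atTop_add_const_right _ 2 tendsto_natCast_atTop_atTop
    exact Tendsto.div_atTop tendsto_const_nhds h1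
  · exact Filter.Eventually.of_forall fun n => Set.mem_Ioi.mpr (by positivity)

lemma nuD_Ioc_zero (hy : y ≠ 0) (ht : 0 < t) {s : ℝ} (hs : 0 < s) (hst : s < t) :
    ∫⁻ u in Set.Ioc 0 s, ENNReal.ofReal (lastZeroBridgeDensity x y t u)
      = ENNReal.ofReal (Real.exp (-(x * y + |x * y|) / t) - bridgeG x y t s) := by
  set nuD : Measure ℝ :=
    volume.withDensity (fun u => ENNReal.ofReal (lastZeroBridgeDensity x y t u)) with hnuD
  have happ : ∀ A : Set ℝ, MeasurableSet A →
      nuD A = ∫⁻ u in A, ENNReal.ofReal (lastZeroBridgeDensity x y t u) := fun A hA =>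
    withDensity_apply _ hA
  set c : ℕ → ℝ := fun n => s / (n + 2) with hc
  have hc_pos : ∀ n, 0 < c n := fun n => by positivity
  have hc_le : ∀ n, c n ≤ s := fun n => by
    rw [hc]
    exact div_le_self hs.le (by push_cast; linarith)
  have hmono : Monotone (fun n : ℕ => Set.Ioc (c n) s) := by
    intro m n hmn
    apply Set.Ioc_subset_Ioc_left
    rw [hc]
    apply div_le_div_of_nonneg_left hs.le (by positivity)
    push_cast
    exact_mod_cast (by have := (Nat.cast_le (α := ℝ)).mpr hmn; linarith : ((m:ℝ) + 2) ≤ (n:ℝ) + 2)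
  have hunion : (⋃ n : ℕ, Set.Ioc (c n) s) = Set.Ioc 0 s := by
    ext u
    simp only [Set.mem_iUnion, Set.mem_Ioc]
    constructor
    · rintro ⟨n, h1, h2⟩
      exact ⟨(hc_pos n).trans h1, h2⟩
    · rintro ⟨h1, h2⟩
      obtain ⟨n, hn⟩ := exists_nat_gt (s / u)
      refine ⟨n, ?_, h2⟩
      rw [hc, div_lt_iff₀ (by positivity)]
      rw [div_lt_iff₀ h1] at hn
      nlinarith
  have hlim1 : Tendsto (fun n : ℕ => nuD (Set.Ioc (c n) s)) atTop (𝓝 (nuD (Set.Ioc 0 s))) := by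
    have := tendsto_measure_iUnion_atTop (μ := nuD) hmono
    rw [hunion] at this
    exact this
  have heval : ∀ n : ℕ, nuD (Set.Ioc (c n) s)
      = ENNReal.ofReal (bridgeG x y t (c n) - bridgeG x y t s) := fun n => by
    rw [happ _ measurableSet_Ioc]
    exact density_lintegral_Ioc x y t (c n) s ht (hc_pos n) (hc_le n) hst
  have hlim2 : Tendsto (fun n : ℕ => nuD (Set.Ioc (c n) s)) atTop
      (𝓝 (ENNReal.ofReal (Real.exp (-(x * y + |x * y|) / t) - bridgeG x y t s))) := by
    simp_rw [heval]
    apply (ENNReal.continuous_ofReal.tendsto _).comp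
    exact ((tendsto_bridgeG_zero x y t hy ht).comp (seq_tendsto_zero hs)).sub_const _
  rw [← happ _ measurableSet_Ioc]
  exact tendsto_nhds_unique hlim1 hlim2

lemma bridgeG_le (hy : y ≠ 0) (ht : 0 < t) {s : ℝ} (hs : 0 < s) (hst : s < t) :
    bridgeG x y t s ≤ Real.exp (-(x * y + |x * y|) / t) := by
  set c : ℕ → ℝ := fun n => s / (n + 2) with hc
  have hc_pos : ∀ n, 0 < c n := fun n => by positivity
  have hc_le : ∀ n, c n ≤ s := fun n => by
    rw [hc]
    exact div_le_self hs.le (by push_cast; linarith)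
  have hlim : Tendsto (fun n : ℕ => bridgeG x y t (c n)) atTop
      (𝓝 (Real.exp (-(x * y + |x * y|) / t))) :=
    (tendsto_bridgeG_zero x y t hy ht).comp (seq_tendsto_zero hs)
  refine ge_of_tendsto hlim (Filter.Eventually.of_forall fun n => ?_)
  have h := density_intervalIntegral x y t (c n) s ht (hc_pos n) (hc_le n) hst
  have hnn : 0 ≤ ∫ u in (c n)..s, lastZeroBridgeDensity x y t u := by
    apply intervalIntegral.integral_nonneg (hc_le n)
    intro u hu
    exact density_nonneg x y t u ((hc_pos n).trans_le hu.1) (lt_of_le_of_lt hu.2 hst)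
  linarith [h ▸ hnn]

lemma nuD_Ioo (hy : y ≠ 0) (ht : 0 < t) :
    ∫⁻ u in Set.Ioo 0 t, ENNReal.ofReal (lastZeroBridgeDensity x y t u)
      = ENNReal.ofReal (Real.exp (-(x * y + |x * y|) / t)) := by
  set nuD : Measure ℝ :=
    volume.withDensity (fun u => ENNReal.ofReal (lastZeroBridgeDensity x y t u)) with hnuD
  have happ : ∀ A : Set ℝ, MeasurableSet A →
      nuD A = ∫⁻ u in A, ENNReal.ofReal (lastZeroBridgeDensity x y t u) := fun A hA =>
    withDensity_apply _ hA
  set a : ℕ → ℝ := fun n => t / (n + 2) with ha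
  set b : ℕ → ℝ := fun n => t - t / (n + 2) with hb
  have ha_pos : ∀ n, 0 < a n := fun n => by positivity
  have hab : ∀ n, a n ≤ b n := fun n => by
    rw [ha, hb]
    have h1 : t / ((n : ℝ) + 2) ≤ t / 2 := by gcongr <;> norm_num
    linarith
  have hb_lt : ∀ n, b n < t := fun n => by
    rw [hb]
    have := ha_pos n
    rw [ha] at this
    linarith
  have hmono : Monotone (fun n : ℕ => Set.Ioc (a n) (b n)) := by
    intro m n hmn
    apply Set.Ioc_subset_Ioc
    · rw [ha]
      apply div_le_div_of_nonneg_left ht.le (by positivity)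
      exact_mod_cast (by have := (Nat.cast_le (α := ℝ)).mpr hmn; linarith : ((m:ℝ) + 2) ≤ (n:ℝ) + 2)
    · rw [hb]
      have : t / ((n:ℝ) + 2) ≤ t / ((m:ℝ) + 2) := by
        apply div_le_div_of_nonneg_left ht.le (by positivity)
        exact_mod_cast (by have := (Nat.cast_le (α := ℝ)).mpr hmn; linarith : ((m:ℝ) + 2) ≤ (n:ℝ) + 2)
      linarith
  have hunion : (⋃ n : ℕ, Set.Ioc (a n) (b n)) = Set.Ioo 0 t := by
    ext u
    simp only [Set.mem_iUnion, Set.mem_Ioc, Set.mem_Ioo]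
    constructor
    · rintro ⟨n, h1, h2⟩
      exact ⟨(ha_pos n).trans h1, lt_of_le_of_lt h2 (hb_lt n)⟩
    · rintro ⟨h1, h2⟩
      have htu : 0 < t - u := by linarith
      obtain ⟨n, hn⟩ := exists_nat_gt (max (t / u) (t / (t - u)))
      have hn1 : t / u < n := lt_of_le_of_lt (le_max_left _ _) hn
      have hn2 : t / (t - u) < n := lt_of_le_of_lt (le_max_right _ _) hn
      refine ⟨n, ?_, ?_⟩
      · rw [ha, div_lt_iff₀ (by positivity)]
        rw [div_lt_iff₀ h1] at hn1
        nlinarith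
      · rw [hb]
        rw [div_lt_iff₀ htu] at hn2
        have : t / ((n : ℝ) + 2) ≤ t - u := by
          rw [div_le_iff₀ (by positivity)]
          nlinarith
        linarith
  have hlim1 : Tendsto (fun n : ℕ => nuD (Set.Ioc (a n) (b n))) atTop
      (𝓝 (nuD (Set.Ioo 0 t))) := by
    have := tendsto_measure_iUnion_atTop (μ := nuD) hmono
    rw [hunion] at this
    exact this
  have heval : ∀ n : ℕ, nuD (Set.Ioc (a n) (b n))
      = ENNReal.ofReal (bridgeG x y t (a n) - bridgeG x y t (b n)) := fun n => by
    rw [happ _ measurableSet_Ioc]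
    exact density_lintegral_Ioc x y t (a n) (b n) ht (ha_pos n) (hab n) (hb_lt n)
  have hblim : Tendsto b atTop (𝓝[<] t) := by
    rw [tendsto_nhdsWithin_iff]
    constructor
    · rw [hb]
      have h1 : Tendsto (fun n : ℕ => t / ((n:ℝ) + 2)) atTop (𝓝 0) := by
        have h2 : Tendsto (fun n : ℕ => ((n : ℝ) + 2)) atTop atTop :=
          tendsto_atTop_add_const_right _ 2 tendsto_natCast_atTop_atTop
        exact Tendsto.div_atTop tendsto_const_nhds h2
      have := (tendsto_const_nhds (x := t) (f := atTop (α := ℕ))).sub h1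
      simpa using this
    · exact Filter.Eventually.of_forall fun n => Set.mem_Iio.mpr (hb_lt n)
  have hlim2 : Tendsto (fun n : ℕ => nuD (Set.Ioc (a n) (b n))) atTop
      (𝓝 (ENNReal.ofReal (Real.exp (-(x * y + |x * y|) / t) - 0))) := by
    simp_rw [heval]
    apply (ENNReal.continuous_ofReal.tendsto _).comp
    exact ((tendsto_bridgeG_zero x y t hy ht).comp (seq_tendsto_zero ht)).sub
      ((tendsto_bridgeG_t x y t hy ht).comp hblim)
  rw [sub_zero] at hlim2
  rw [← happ _ measurableSet_Ioo]
  exact tendsto_nhds_unique hlim1 hlim2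

end main


/-- CDF of the last zero `g` of a Brownian bridge on `[0,t]` from `x` to `y ≠ 0`
(with `sup ∅ := 0`, the law of `g` being an atom at `0` plus the stated density). -/

theorem cdf_last_zero_brownian_bridge
    {Ω : Type*} [MeasurableSpace Ω] (μ : Measure Ω) [IsProbabilityMeasure μ]
    (x y t : ℝ) (hy : y ≠ 0) (ht : 0 < t)
    (g : Ω → ℝ) (hg : Measurable g)
    (hlaw : μ.map g
      = ENNReal.ofReal (1 - ∫ s in Set.Ioo (0 : ℝ) t, lastZeroBridgeDensity x y t s)
          • Measure.dirac (0 : ℝ)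
        + volume.withDensity (fun s =>
            Set.indicator (Set.Ioo (0 : ℝ) t)
              (fun s => ENNReal.ofReal (lastZeroBridgeDensity x y t s)) s)) :
    (∀ s : ℝ, 0 < s → s < t →
      μ {ω | g ω ≤ s}
        = ENNReal.ofReal
            (1 - Real.exp (-(x * y) / t)
              * (Real.exp (|x * y| / t)
                  * stdNormalCdf (-|x| * Real.sqrt ((t - s) / (s * t))
                      - |y| * Real.sqrt (s / (t * (t - s))))
                + Real.exp (-|x * y| / t)
                  * stdNormalCdf (|x| * Real.sqrt ((t - s) / (s * t))
                      - |y| * Real.sqrt (s / (t * (t - s))))))) ∧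
    μ {ω | g ω = 0} = ENNReal.ofReal (1 - Real.exp (-(x * y + |x * y|) / t)) := by
  set K : ℝ := Real.exp (-(x * y + |x * y|) / t) with hK
  have hK_pos : 0 < K := Real.exp_pos _
  have hK_le_one : K ≤ 1 := by
    rw [hK]
    apply Real.exp_le_one_iff.mpr
    apply div_nonpos_of_nonpos_of_nonneg _ ht.le
    have := neg_abs_le (x * y)
    linarith
  -- the real integral over Ioo 0 t equals K
  have hI : (∫ s in Set.Ioo (0 : ℝ) t, lastZeroBridgeDensity x y t s) = K := by
    rw [MeasureTheory.integral_eq_lintegral_of_nonneg_ae]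
    · rw [nuD_Ioo x y t hy ht, ENNReal.toReal_ofReal hK_pos.le]
    · rw [Filter.EventuallyLE, ae_restrict_iff' measurableSet_Ioo]
      exact Filter.Eventually.of_forall fun u hu => density_nonneg x y t u hu.1 hu.2
    · exact (density_measurable x y t).aestronglyMeasurable.restrict
  -- evaluating the indicator withDensity measure
  have hInd : ∀ A : Set ℝ, MeasurableSet A →
      (volume.withDensity (fun s =>
          Set.indicator (Set.Ioo (0 : ℝ) t)
            (fun s => ENNReal.ofReal (lastZeroBridgeDensity x y t s)) s)) A
        = ∫⁻ u in Set.Ioo (0 : ℝ) t ∩ A, ENNReal.ofReal (lastZeroBridgeDensity x y t u) := by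
    intro A hA
    rw [withDensity_apply _ hA, lintegral_indicator measurableSet_Ioo,
      Measure.restrict_restrict measurableSet_Ioo]
  constructor
  · intro s hs0 hst
    have hset : {ω | g ω ≤ s} = g ⁻¹' Set.Iic s := rfl
    rw [hset, ← Measure.map_apply hg measurableSet_Iic, hlaw]
    rw [Measure.add_apply, Measure.smul_apply, smul_eq_mul,
      Measure.dirac_apply_of_mem (Set.mem_Iic.mpr hs0.le), mul_one, hI,
      hInd _ measurableSet_Iic]
    have hset2 : Set.Ioo (0 : ℝ) t ∩ Set.Iic s = Set.Ioc 0 s := by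
      ext u
      simp only [Set.mem_inter_iff, Set.mem_Ioo, Set.mem_Iic, Set.mem_Ioc]
      constructor
      · rintro ⟨⟨h1, _⟩, h3⟩; exact ⟨h1, h3⟩
      · rintro ⟨h1, h2⟩; exact ⟨⟨h1, lt_of_le_of_lt h2 hst⟩, h2⟩
    rw [hset2, nuD_Ioc_zero x y t hy ht hs0 hst]
    rw [← ENNReal.ofReal_add (by linarith) (by linarith [bridgeG_le x y t hy ht hs0 hst])]
    have : 1 - K + (K - bridgeG x y t s) = 1 - bridgeG x y t s := by ring
    rw [this]
    rfl
  · have hset : {ω | g ω = 0} = g ⁻¹' {0} := rfl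
    rw [hset, ← Measure.map_apply hg (measurableSet_singleton 0), hlaw]
    rw [Measure.add_apply, Measure.smul_apply, smul_eq_mul,
      Measure.dirac_apply_of_mem (Set.mem_singleton 0), mul_one, hI,
      hInd _ (measurableSet_singleton 0)]
    have hset2 : Set.Ioo (0 : ℝ) t ∩ {(0 : ℝ)} = ∅ := by
      ext u
      simp only [Set.mem_inter_iff, Set.mem_Ioo, Set.mem_singleton_iff,
        Set.mem_empty_iff_false, iff_false, not_and]
      rintro ⟨h1, _⟩ h3
      exact absurd h3 h1.ne'
    rw [hset2, Measure.restrict_empty, lintegral_zero_measure, add_zero]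


end Auxiliary
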